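/- Let A and B be real symmetric n×n matrices with Q(A) ∩ Q(B) = N(A) ∩ N(B) and dim(N(A) ∩ N(B)) ≤ n − 3. Let r = dim(N(A) ∩ N(B)) and let U be an n×(n−r) real matrix whose columns form a basis of the orthogonal complement of N(A) ∩ N(B). Then there exist μ, σ ∈ ℝ such that μ·UᵀAU + σ·UᵀBU is positive definite. -/

import Mathlib

open Matrix Set

namespace Cal

variable {m : ℕ}

/-- A path given by a formula on `[0,1]`. -/
lemma joinedIn_of_fun {X : Type*} [TopologicalSpace X] {S : Set X} {F : ℝ → X} {x y : X}
    (hF : Continuous F) (h0 : F 0 = x) (h1 : F 1 = y)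
    (hmem : ∀ t, t ∈ Set.Icc (0:ℝ) 1 → F t ∈ S) : JoinedIn S x y := by
  subst h0 h1
  exact ⟨⟨⟨fun t => F t, hF.comp continuous_subtype_val⟩, rfl, rfl⟩, fun t => hmem t t.2⟩

def qv (d : Fin m → ℝ) (z : Fin m → ℝ) : ℝ := ∑ i, d i * z i * z i

def bv (d : Fin m → ℝ) (z w : Fin m → ℝ) : ℝ := ∑ i, d i * z i * w i

def Zs (d : Fin m → ℝ) : Set (Fin m → ℝ) := {z | z ≠ 0 ∧ qv d z = 0}

lemma qv_expand (d u v w : Fin m → ℝ) (a b : ℝ) :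
    qv d (a • u + b • v + w) =
      a^2 * qv d u + b^2 * qv d v + qv d w
        + 2*a*b * bv d u v + 2*a * bv d u w + 2*b * bv d v w := by
  simp only [qv, bv, Finset.mul_sum, ← Finset.sum_add_distrib]
  exact Finset.sum_congr rfl fun i _ => by
    simp only [Pi.add_apply, Pi.smul_apply, smul_eq_mul]; ring

lemma qv_smul (d : Fin m → ℝ) (a : ℝ) (z : Fin m → ℝ) :
    qv d (a • z) = a^2 * qv d z := by
  simp only [qv, Finset.mul_sum]
  exact Finset.sum_congr rfl fun i _ => by
    simp only [Pi.smul_apply, smul_eq_mul]; ring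

lemma qv_neg (d : Fin m → ℝ) (z : Fin m → ℝ) : qv d (-z) = qv d z := by
  have := qv_smul d (-1) z
  simpa using this

lemma qv_negd (d : Fin m → ℝ) (z : Fin m → ℝ) : qv (-d) z = - qv d z := by
  simp only [qv, ← Finset.sum_neg_distrib]
  exact Finset.sum_congr rfl fun i _ => by simp only [Pi.neg_apply]; ring

lemma Zs_negd (d : Fin m → ℝ) : Zs (-d) = Zs d := by
  ext z; simp [Zs, qv_negd, neg_eq_zero]

lemma qv_cont (d : Fin m → ℝ) : Continuous (qv d) := by
  apply continuous_finset_sum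
  exact fun i _ => (continuous_const.mul (continuous_apply i)).mul (continuous_apply i)

/-- positive-support quadratic values -/
lemma qv_nonneg_of_supp (d : Fin m → ℝ) {u : Fin m → ℝ} (hu : ∀ i, ¬ 0 < d i → u i = 0) :
    0 ≤ qv d u := by
  apply Finset.sum_nonneg
  intro i _
  by_cases h : 0 < d i
  · nlinarith [mul_self_nonneg (u i), h.le]
  · simp [hu i h]

lemma qv_pos_of_supp (d : Fin m → ℝ) {u : Fin m → ℝ} (hu : ∀ i, ¬ 0 < d i → u i = 0)
    (hne : u ≠ 0) : 0 < qv d u := by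
  obtain ⟨i₀, hi₀⟩ : ∃ i, u i ≠ 0 := by
    by_contra h; push_neg at h; exact hne (funext h)
  have hd : 0 < d i₀ := by
    by_contra h; exact hi₀ (hu i₀ h)
  apply Finset.sum_pos'
  · intro i _
    by_cases h : 0 < d i
    · nlinarith [mul_self_nonneg (u i), h.le]
    · simp [hu i h]
  · exact ⟨i₀, Finset.mem_univ _, by nlinarith [mul_self_pos.mpr hi₀]⟩

lemma bv_zero_of_supp (d : Fin m → ℝ) {u v : Fin m → ℝ} (hu : ∀ i, ¬ 0 < d i → u i = 0)
    (hv : ∀ i, 0 < d i → v i = 0) : bv d u v = 0 := by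
  apply Finset.sum_eq_zero
  intro i _
  by_cases h : 0 < d i
  · simp [hv i h]
  · simp [hu i h]

/-- dichotomy: two nonzero vectors are dependent-with-nonzero-coefficient or independent. -/
lemma dich {z w : Fin m → ℝ} (hz : z ≠ 0) (hw : w ≠ 0) :
    (∃ c : ℝ, c ≠ 0 ∧ w = c • z) ∨ (∀ a b : ℝ, a • z + b • w = 0 → a = 0 ∧ b = 0) := by
  by_cases h : ∀ a b : ℝ, a • z + b • w = 0 → a = 0 ∧ b = 0
  · exact Or.inr h
  · left
    push_neg at h
    obtain ⟨a, b, hab, hne⟩ := h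
    have hb : b ≠ 0 := by
      rintro rfl
      rcases hne (by
        have : a • z = 0 := by simpa using hab
        rcases smul_eq_zero.mp this with h | h
        · exact h
        · exact absurd h hz) with h
      exact h rfl
    refine ⟨-a/b, ?_, ?_⟩
    · intro h0
      have ha : a = 0 := by field_simp at h0; simpa using h0
      subst ha
      have : b • w = 0 := by simpa using hab
      rcases smul_eq_zero.mp this with h | h
      · exact hb h
      · exact hw h
    · funext i
      have h2 := congrFun hab i
      simp only [Pi.add_apply, Pi.smul_apply, smul_eq_mul, Pi.zero_apply] at h2
      simp only [Pi.smul_apply, smul_eq_mul]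
      field_simp
      linear_combination h2

lemma qv_zero (d : Fin m → ℝ) : qv d 0 = 0 := by simp [qv]

lemma bv_zero_right (d : Fin m → ℝ) (u : Fin m → ℝ) : bv d u 0 = 0 := by simp [bv]

lemma bv_smul_left (d : Fin m → ℝ) (a : ℝ) (u w : Fin m → ℝ) :
    bv d (a • u) w = a * bv d u w := by
  simp only [bv, Finset.mul_sum]
  exact Finset.sum_congr rfl fun i _ => by simp only [Pi.smul_apply, smul_eq_mul]; ring

lemma qv_add (d : Fin m → ℝ) (u w : Fin m → ℝ) :
    qv d (u + w) = qv d u + qv d w + 2 * bv d u w := by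
  have h := qv_expand d u 0 w 1 0
  simpa [qv_zero, bv_zero_right, bv] using h

lemma joined_neg {d : Fin m → ℝ} {x y : Fin m → ℝ} (h : JoinedIn (Zs d) x y) :
    JoinedIn (Zs d) (-x) (-y) := by
  obtain ⟨γ, hγ⟩ := h
  refine ⟨γ.map continuous_neg, fun t => ?_⟩
  have ht := hγ t
  simp only [Path.map_coe, Function.comp_apply]
  exact ⟨neg_ne_zero.mpr ht.1, by rw [qv_neg]; exact ht.2⟩

lemma joined_smul {d : Fin m → ℝ} {z : Fin m → ℝ} (hz : z ∈ Zs d) {c : ℝ} (hc : 0 < c) :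
    JoinedIn (Zs d) z (c • z) := by
  apply joinedIn_of_fun (F := fun t => (1 + t*(c-1)) • z)
  · fun_prop
  · norm_num
  · have : (1:ℝ) + 1*(c-1) = c := by ring
    rw [this]
  · intro t ht
    have hpos : 0 < 1 + t*(c-1) := by
      rcases lt_or_ge t 1 with h|h
      · nlinarith [mul_nonneg ht.1 hc.le]
      · have : t = 1 := le_antisymm ht.2 h
        rw [this]; linarith
    exact ⟨smul_ne_zero (ne_of_gt hpos) hz.1, by rw [qv_smul, hz.2]; ring⟩

lemma joined_rot {d u v w : Fin m → ℝ} (T : ℝ)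
    (hq : qv d u = qv d v) (hBuv : bv d u v = 0) (hBuw : bv d u w = 0) (hBvw : bv d v w = 0)
    (hmem : qv d (u + w) = 0)
    (hne : ∀ a b : ℝ, a^2 + b^2 = 1 → a • u + b • v + w ≠ 0) :
    JoinedIn (Zs d) (u + w) (Real.cos T • u + Real.sin T • v + w) := by
  have h2 : qv d u + qv d w = 0 := by
    have h3 := qv_add d u w
    rw [hBuw, hmem] at h3
    linarith
  apply joinedIn_of_fun (F := fun t => Real.cos (t*T) • u + Real.sin (t*T) • v + w)
  · fun_prop
  · simp
  · simp
  · intro t ht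
    constructor
    · apply hne
      rw [add_comm]
      exact Real.sin_sq_add_cos_sq (t*T)
    · show qv d _ = 0
      rw [qv_expand, hBuv, hBuw, hBvw, hq]
      have h1 := Real.sin_sq_add_cos_sq (t*T)
      have h4 : qv d v + qv d w = 0 := by rw [← hq]; exact h2
      linear_combination h4 + (qv d v) * h1
  
lemma joined_rot_pair {d : Fin m → ℝ} {u v : Fin m → ℝ}
    (hqu : qv d u = 0) (hqv : qv d v = 0) (hB : bv d u v = 0)
    (hind : ∀ a b : ℝ, a • u + b • v = 0 → a = 0 ∧ b = 0) :
    JoinedIn (Zs d) u v := by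
  have h := joined_rot (d := d) (u := u) (v := v) (w := 0) (Real.pi/2)
    (by rw [hqu, hqv]) hB (bv_zero_right d u) (bv_zero_right d v)
    (by rw [add_zero, hqu])
    (by
      intro a b hab h0
      rw [add_zero] at h0
      obtain ⟨ha, hb⟩ := hind a b h0
      rw [ha, hb] at hab
      norm_num at hab)
  simpa [Real.cos_pi_div_two, Real.sin_pi_div_two] using h

lemma joined_move {d : Fin m → ℝ} {u u' v : Fin m → ℝ} {c : ℝ} (hc : 0 < c)
    (hu : ∀ i, ¬ 0 < d i → u i = 0) (hu' : ∀ i, ¬ 0 < d i → u' i = 0)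
    (hv : ∀ i, 0 < d i → v i = 0)
    (hqu : qv d u = c) (hqu' : qv d u' = c) (hm : qv d (u + v) = 0) :
    JoinedIn (Zs d) (u + v) (u' + v) ∨ JoinedIn (Zs d) (u + v) (-u' + v) := by
  have hBuv : bv d u v = 0 := bv_zero_of_supp d hu hv
  have hune : u ≠ 0 := by
    rintro rfl; rw [qv_zero] at hqu; exact hc.ne hqu
  have hu'ne : u' ≠ 0 := by
    rintro rfl; rw [qv_zero] at hqu'; exact hc.ne hqu'
  have hqv : qv d v = -c := by
    have h3 := qv_add d u v
    rw [hBuv, hm, hqu] at h3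
    linarith
  have hsumne : ∀ u₁ : Fin m → ℝ, (∀ i, ¬ 0 < d i → u₁ i = 0) → u₁ ≠ 0 → u₁ + v ≠ 0 := by
    intro u₁ hsupp hne
    obtain ⟨i₀, hi₀⟩ : ∃ i, u₁ i ≠ 0 := by
      by_contra h; push_neg at h; exact hne (funext h)
    have hdi : 0 < d i₀ := by by_contra h; exact hi₀ (hsupp i₀ h)
    intro h0
    have := congrFun h0 i₀
    simp only [Pi.add_apply, Pi.zero_apply, hv i₀ hdi, add_zero] at this
    exact hi₀ this
  have hmemuv : u + v ∈ Zs d := ⟨hsumne u hu hune, hm⟩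
  rcases dich hune hu'ne with ⟨lam, hl0, hdep⟩ | hind
  · -- dependent case
    have hl2 : lam ^ 2 = 1 := by
      have h5 := hqu'
      rw [hdep, qv_smul, hqu] at h5
      nlinarith
    have : (lam - 1) * (lam + 1) = 0 := by nlinarith
    rcases mul_eq_zero.mp this with h | h
    · left
      have : lam = 1 := by linarith
      rw [hdep, this, one_smul]
      exact JoinedIn.refl hmemuv
    · right
      have : lam = -1 := by linarith
      rw [hdep, this]
      have : -((-1 : ℝ) • u) + v = u + v := by simp
      rw [this]
      exact JoinedIn.refl hmemuv
  · -- independent case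
    left
    set w : ℝ → Fin m → ℝ := fun t => Real.cos (t*(Real.pi/2)) • u + Real.sin (t*(Real.pi/2)) • u' with hw
    have hwsupp : ∀ t, ∀ i, ¬ 0 < d i → w t i = 0 := by
      intro t i hi
      simp [hw, hu i hi, hu' i hi]
    have hwne : ∀ t : ℝ, w t ≠ 0 := by
      intro t h0
      obtain ⟨h1, h2⟩ := hind _ _ h0
      have := Real.sin_sq_add_cos_sq (t*(Real.pi/2))
      rw [h1, h2] at this
      norm_num at this
    have hwpos : ∀ t : ℝ, 0 < qv d (w t) := fun t => qv_pos_of_supp d (hwsupp t) (hwne t)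
    have hcontw : Continuous w := by fun_prop
    have hcont1 : Continuous fun t => qv d (w t) := (qv_cont d).comp hcontw
    apply joinedIn_of_fun
      (F := fun t => Real.sqrt (c / qv d (w t)) • w t + v)
    · exact ((Real.continuous_sqrt.comp
        (continuous_const.div hcont1 (fun t => (hwpos t).ne'))).smul hcontw).add continuous_const
    · have hw0 : w 0 = u := by simp [hw]
      rw [hw0, hqu, div_self hc.ne', Real.sqrt_one, one_smul]
    · have hw1 : w 1 = u' := by simp [hw, Real.cos_pi_div_two, Real.sin_pi_div_two]
      rw [hw1, hqu', div_self hc.ne', Real.sqrt_one, one_smul]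
    · intro t ht
      set s := Real.sqrt (c / qv d (w t)) with hs
      have hspos : 0 < s := Real.sqrt_pos.mpr (div_pos hc (hwpos t))
      constructor
      · exact hsumne _ (fun i hi => by simp [hwsupp t i hi]) (smul_ne_zero hspos.ne' (hwne t))
      · show qv d _ = 0
        rw [qv_add, qv_smul, bv_smul_left, bv_zero_of_supp d (hwsupp t) hv, hqv, hs,
          Real.sq_sqrt (div_nonneg hc.le (hwpos t).le), div_mul_cancel₀ _ (hwpos t).ne']
        ring
lemma bv_comm (d : Fin m → ℝ) (z w : Fin m → ℝ) : bv d z w = bv d w z := by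
  unfold bv; exact Finset.sum_congr rfl fun i _ => by ring

lemma qv_single (d : Fin m → ℝ) (j : Fin m) (a : ℝ) :
    qv d (Pi.single j a) = d j * a * a := by
  unfold qv
  rw [Finset.sum_eq_single j]
  · simp
  · intro i _ hij; simp [Pi.single_eq_of_ne hij]
  · intro h; exact absurd (Finset.mem_univ j) h

lemma bv_single_left (d : Fin m → ℝ) (j : Fin m) (a : ℝ) (z : Fin m → ℝ) :
    bv d (Pi.single j a) z = d j * a * z j := by
  unfold bv
  rw [Finset.sum_eq_single j]
  · simp
  · intro i _ hij; simp [Pi.single_eq_of_ne hij]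
  · intro h; exact absurd (Finset.mem_univ j) h

noncomputable def pvec (d : Fin m → ℝ) (i₀ : Fin m) : Fin m → ℝ :=
  Pi.single i₀ (Real.sqrt (d i₀))⁻¹

noncomputable def nvec (d : Fin m → ℝ) (j₀ : Fin m) : Fin m → ℝ :=
  Pi.single j₀ (Real.sqrt (-d j₀))⁻¹

section hub

variable {d : Fin m → ℝ} {i₀ j₀ : Fin m}

lemma pvec_self (hi : 0 < d i₀) : pvec d i₀ i₀ = (Real.sqrt (d i₀))⁻¹ := Pi.single_eq_same _ _

lemma pvec_self_ne (hi : 0 < d i₀) : pvec d i₀ i₀ ≠ 0 := by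
  rw [pvec_self hi]
  exact inv_ne_zero (Real.sqrt_pos.mpr hi).ne'

lemma pvec_ne_apply (hi : 0 < d i₀) {i : Fin m} (h : i ≠ i₀) : pvec d i₀ i = 0 :=
  Pi.single_eq_of_ne h _

lemma nvec_self (hj : d j₀ < 0) : nvec d j₀ j₀ = (Real.sqrt (-d j₀))⁻¹ := Pi.single_eq_same _ _

lemma nvec_self_ne (hj : d j₀ < 0) : nvec d j₀ j₀ ≠ 0 := by
  rw [nvec_self hj]
  exact inv_ne_zero (Real.sqrt_pos.mpr (by linarith)).ne'

lemma nvec_ne_apply {i : Fin m} (h : i ≠ j₀) : nvec d j₀ i = 0 :=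
  Pi.single_eq_of_ne h _

lemma qv_pvec (hi : 0 < d i₀) : qv d (pvec d i₀) = 1 := by
  unfold pvec
  rw [qv_single]
  rw [← Real.mul_self_sqrt hi.le]
  have h0 : Real.sqrt (d i₀) ≠ 0 := (Real.sqrt_pos.mpr hi).ne'
  field_simp
  rw [Real.sqrt_sq (Real.sqrt_nonneg (d i₀))]

lemma qv_nvec (hj : d j₀ < 0) : qv d (nvec d j₀) = -1 := by
  unfold nvec
  rw [qv_single]
  have h1 : d j₀ = -(Real.sqrt (-d j₀) * Real.sqrt (-d j₀)) := by
    rw [Real.mul_self_sqrt (by linarith)]; ring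
  rw [h1]
  have h0 : Real.sqrt (-d j₀) ≠ 0 := (Real.sqrt_pos.mpr (by linarith)).ne'
  field_simp
  rw [Real.sqrt_sq (Real.sqrt_nonneg (-d j₀))]

lemma pvec_supp (hi : 0 < d i₀) : ∀ i, ¬ 0 < d i → pvec d i₀ i = 0 := by
  intro i h
  rcases eq_or_ne i i₀ with rfl | hne
  · exact absurd hi h
  · exact pvec_ne_apply hi hne

lemma nvec_supp (hj : d j₀ < 0) : ∀ i, ¬ d i < 0 → nvec d j₀ i = 0 := by
  intro i h
  rcases eq_or_ne i j₀ with rfl | hne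
  · exact absurd hj h
  · exact nvec_ne_apply hne

lemma hij (hi : 0 < d i₀) (hj : d j₀ < 0) : i₀ ≠ j₀ := by
  intro h; rw [h] at hi; linarith

lemma bv_pn (hi : 0 < d i₀) (hj : d j₀ < 0) : bv d (pvec d i₀) (nvec d j₀) = 0 := by
  unfold pvec
  rw [bv_single_left]
  rw [nvec_ne_apply (hij hi hj)]
  ring

lemma qv_hub (hi : 0 < d i₀) (hj : d j₀ < 0) : qv d (pvec d i₀ + nvec d j₀) = 0 := by
  rw [qv_add, qv_pvec hi, qv_nvec hj, bv_pn hi hj]; ring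

lemma qv_hub' (hi : 0 < d i₀) (hj : d j₀ < 0) : qv d (pvec d i₀ - nvec d j₀) = 0 := by
  rw [sub_eq_add_neg, qv_add, qv_pvec hi, qv_neg, qv_nvec hj]
  have : bv d (pvec d i₀) (-nvec d j₀) = 0 := by
    unfold pvec
    rw [bv_single_left]
    simp [nvec_ne_apply (hij hi hj)]
  rw [this]; ring

end hub
lemma exists_third (hm3 : 3 ≤ m) (i₀ j₀ : Fin m) : ∃ k : Fin m, k ≠ i₀ ∧ k ≠ j₀ := by
  by_contra h
  push_neg at h
  have hsub : (Finset.univ : Finset (Fin m)) ⊆ {i₀, j₀} := by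
    intro k _
    rcases eq_or_ne k i₀ with rfl | hk
    · simp
    · simp [h k hk]
  have hcard := Finset.card_le_card hsub
  have h3 : (Finset.univ : Finset (Fin m)).card = m := by simp
  have h2 : ({i₀, j₀} : Finset (Fin m)).card ≤ 2 :=
    le_trans (Finset.card_insert_le _ _) (by simp)
  omega

section hub2

variable {d : Fin m → ℝ}

lemma bv_pvec_left (k : Fin m) (z : Fin m → ℝ) :
    bv d (pvec d k) z = d k * (Real.sqrt (d k))⁻¹ * z k := bv_single_left d k _ z

lemma bv_nvec_left (k : Fin m) (z : Fin m → ℝ) :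
    bv d (nvec d k) z = d k * (Real.sqrt (-d k))⁻¹ * z k := bv_single_left d k _ z

lemma hub_signs (hm3 : 3 ≤ m) {i₀ j₀ : Fin m} (hi : 0 < d i₀) (hj : d j₀ < 0) :
    JoinedIn (Zs d) (pvec d i₀ - nvec d j₀) (pvec d i₀ + nvec d j₀) ∨
    JoinedIn (Zs d) (pvec d i₀ - nvec d j₀) (-(pvec d i₀ + nvec d j₀)) := by
  obtain ⟨k, hki, hkj⟩ := exists_third hm3 i₀ j₀
  rcases lt_trichotomy (d k) 0 with hk | hk | hk
  · -- spare negative coordinate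
    left
    have h := joined_rot (d := d) (u := -(nvec d j₀)) (v := nvec d k) (w := pvec d i₀) Real.pi
      (by rw [qv_neg, qv_nvec hj, qv_nvec hk])
      (by rw [bv_comm, bv_nvec_left]; simp [Pi.neg_apply, nvec_ne_apply hkj])
      (by rw [bv_comm, bv_pvec_left]; simp [Pi.neg_apply, nvec_ne_apply (hij hi hj)])
      (by rw [bv_nvec_left]; simp [pvec_ne_apply hi hki])
      (by rw [neg_add_eq_sub]; exact qv_hub' hi hj)
      (by
        intro a b hab h0
        have h1 := congrFun h0 i₀
        simp only [Pi.add_apply, Pi.smul_apply, Pi.neg_apply, Pi.zero_apply, smul_eq_mul] at h1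
        rw [nvec_ne_apply (hij hi hj), nvec_ne_apply hki.symm, pvec_self hi] at h1
        simp at h1
        exact absurd h1 (Real.sqrt_pos.mpr hi).ne')
    rw [neg_add_eq_sub] at h
    have hE : Real.cos Real.pi • (-(nvec d j₀)) + Real.sin Real.pi • (nvec d k) + pvec d i₀
        = pvec d i₀ + nvec d j₀ := by
      rw [Real.cos_pi, Real.sin_pi]
      simp only [neg_smul, one_smul, neg_neg, zero_smul, add_zero]
      abel
    rw [hE] at h
    exact h
  · -- spare zero coordinate
    left
    have hw_qv : qv d (Pi.single k (1:ℝ)) = 0 := by rw [qv_single, hk]; ring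
    have h1 : JoinedIn (Zs d) (pvec d i₀ - nvec d j₀) (Pi.single k (1:ℝ)) := by
      apply joined_rot_pair (qv_hub' hi hj) hw_qv
      · rw [bv_comm, bv_single_left, hk]; ring
      · intro a b hab
        have h0 := congrFun hab i₀
        simp only [Pi.add_apply, Pi.smul_apply, Pi.sub_apply, Pi.zero_apply, smul_eq_mul] at h0
        rw [nvec_ne_apply (hij hi hj), Pi.single_eq_of_ne hki.symm, pvec_self hi] at h0
        have hinv := inv_ne_zero (Real.sqrt_pos.mpr hi).ne'
        have ha : a = 0 := by
          simp at h0
          rcases h0 with h0 | h0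
          · exact h0
          · exact absurd h0 (Real.sqrt_pos.mpr hi).ne'
        refine ⟨ha, ?_⟩
        have h0k := congrFun hab k
        simp only [Pi.add_apply, Pi.smul_apply, Pi.sub_apply, Pi.zero_apply, smul_eq_mul,
          Pi.single_eq_same, ha] at h0k
        rw [pvec_ne_apply hi hki, nvec_ne_apply hkj] at h0k
        simpa using h0k
    have h2 : JoinedIn (Zs d) (Pi.single k (1:ℝ)) (pvec d i₀ + nvec d j₀) := by
      apply joined_rot_pair hw_qv (qv_hub hi hj)
      · rw [bv_single_left, hk]; ring
      · intro a b hab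
        have h0k := congrFun hab k
        simp only [Pi.add_apply, Pi.smul_apply, Pi.zero_apply, smul_eq_mul,
          Pi.single_eq_same] at h0k
        rw [pvec_ne_apply hi hki, nvec_ne_apply hkj] at h0k
        have ha : a = 0 := by simpa using h0k
        refine ⟨ha, ?_⟩
        have h0 := congrFun hab i₀
        simp only [Pi.add_apply, Pi.smul_apply, Pi.zero_apply, smul_eq_mul, ha] at h0
        rw [nvec_ne_apply (hij hi hj), Pi.single_eq_of_ne hki.symm, pvec_self hi] at h0
        have hinv := inv_ne_zero (Real.sqrt_pos.mpr hi).ne'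
        simp at h0
        rcases h0 with h0 | h0
        · exact h0
        · exact absurd h0 (Real.sqrt_pos.mpr hi).ne'
    exact h1.trans h2
  · -- spare positive coordinate
    right
    have h := joined_rot (d := d) (u := pvec d i₀) (v := pvec d k) (w := -(nvec d j₀)) Real.pi
      (by rw [qv_pvec hi, qv_pvec hk])
      (by rw [bv_pvec_left]; simp [pvec_ne_apply hk hki.symm])
      (by rw [bv_pvec_left]; simp [Pi.neg_apply, nvec_ne_apply (hij hi hj)])
      (by rw [bv_pvec_left]; simp [Pi.neg_apply, nvec_ne_apply hkj])
      (by rw [← sub_eq_add_neg]; exact qv_hub' hi hj)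
      (by
        intro a b hab h0
        have h1 := congrFun h0 j₀
        simp only [Pi.add_apply, Pi.smul_apply, Pi.neg_apply, Pi.zero_apply, smul_eq_mul] at h1
        rw [pvec_ne_apply hi (hij hi hj).symm, pvec_ne_apply hk hkj.symm, nvec_self hj] at h1
        simp at h1
        exact absurd h1 (Real.sqrt_pos.mpr (show (0:ℝ) < -d j₀ by linarith)).ne')
    rw [← sub_eq_add_neg] at h
    have hE : Real.cos Real.pi • (pvec d i₀) + Real.sin Real.pi • (pvec d k) + -(nvec d j₀)
        = -(pvec d i₀ + nvec d j₀) := by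
      rw [Real.cos_pi, Real.sin_pi]
      simp only [neg_smul, one_smul, zero_smul, add_zero]
      abel
    rw [hE] at h
    exact h

end hub2
lemma psd_case (d : Fin m → ℝ) (hd : ∀ i, 0 ≤ d i) {x y : Fin m → ℝ}
    (hx : x ∈ Zs d) (hy : y ∈ Zs d) :
    JoinedIn (Zs d) x y ∨ JoinedIn (Zs d) x (-y) := by
  have key : ∀ z : Fin m → ℝ, z ∈ Zs d → ∀ i, d i * z i = 0 := by
    intro z hz i
    have h0 : ∀ j ∈ Finset.univ, 0 ≤ d j * z j * z j := fun j _ => by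
      nlinarith [mul_self_nonneg (z j), hd j]
    have h1 : d i * z i * z i = 0 :=
      (Finset.sum_eq_zero_iff_of_nonneg h0).mp hz.2 i (Finset.mem_univ i)
    rcases mul_eq_zero.mp h1 with h | h
    · exact h
    · rw [h, mul_zero]
  have hB : bv d x y = 0 := by
    apply Finset.sum_eq_zero
    intro i _
    rw [key x hx i, zero_mul]
  rcases dich hx.1 hy.1 with ⟨lam, hl0, hdep⟩ | hind
  · rcases lt_or_gt_of_ne hl0 with h | h
    · right
      have hE : -y = (-lam) • x := by rw [hdep, neg_smul]
      rw [hE]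
      exact joined_smul hx (by linarith)
    · left
      rw [hdep]
      exact joined_smul hx h
  · left
    exact joined_rot_pair hx.2 hy.2 hB hind

lemma to_hub {d : Fin m → ℝ} (hm3 : 3 ≤ m) {i₀ j₀ : Fin m} (hi : 0 < d i₀) (hj : d j₀ < 0)
    {z : Fin m → ℝ} (hz : z ∈ Zs d) :
    JoinedIn (Zs d) z (pvec d i₀ + nvec d j₀) ∨
    JoinedIn (Zs d) z (-(pvec d i₀ + nvec d j₀)) := by
  classical
  set p := pvec d i₀ with hp
  set n := nvec d j₀ with hn
  set zp : Fin m → ℝ := fun i => if 0 < d i then z i else 0 with hzp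
  set zn : Fin m → ℝ := fun i => if d i < 0 then z i else 0 with hzn
  have hzp_supp : ∀ i, ¬ 0 < d i → zp i = 0 := fun i h => by simp [hzp, h]
  have hzn_supp' : ∀ i, ¬ 0 < (-d) i → zn i = 0 := by
    intro i h
    simp only [Pi.neg_apply, neg_pos, not_lt] at h
    simp [hzn, not_lt.mpr h]
  have hzn_pos_supp : ∀ i, 0 < d i → zn i = 0 := by
    intro i h
    simp [hzn, not_lt.mpr h.le]
  have hzp_neg_supp : ∀ i, 0 < (-d) i → zp i = 0 := by
    intro i h
    simp only [Pi.neg_apply, neg_pos] at h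
    simp [hzp, not_lt.mpr h.le]
  have hsplit : qv d z = qv d zp + qv d zn := by
    unfold qv
    rw [← Finset.sum_add_distrib]
    apply Finset.sum_congr rfl
    intro i _
    rcases lt_trichotomy (d i) 0 with h | h | h
    · simp [hzp, hzn, h, not_lt.mpr h.le, lt_asymm h]
    · simp [h]
    · simp [hzp, hzn, h, not_lt.mpr h.le, lt_asymm h]
  by_cases hzp0 : zp = 0
  · -- z is supported on the kernel coordinates
    have hqzp : qv d zp = 0 := by rw [hzp0, qv_zero]
    have hzn0 : zn = 0 := by
      by_contra h
      have hpos := qv_pos_of_supp (-d) hzn_supp' h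
      rw [qv_negd] at hpos
      have : qv d zn = 0 := by
        have := hz.2
        rw [hsplit, hqzp] at this
        linarith
      linarith
    have hzcoord : ∀ i, d i ≠ 0 → z i = 0 := by
      intro i hdi
      rcases lt_or_gt_of_ne hdi with h | h
      · have := congrFun hzn0 i
        simpa [hzn, h] using this
      · have := congrFun hzp0 i
        simpa [hzp, h] using this
    left
    apply joined_rot_pair hz.2 (qv_hub hi hj)
    · apply Finset.sum_eq_zero
      intro i _
      by_cases h : d i = 0
      · rw [h]; ring
      · rw [hzcoord i h]; ring
    · intro a b hab
      have h0 := congrFun hab i₀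
      simp only [Pi.add_apply, Pi.smul_apply, Pi.zero_apply, smul_eq_mul] at h0
      rw [hzcoord i₀ hi.ne', nvec_ne_apply (hij hi hj), pvec_self hi] at h0
      have hb : b = 0 := by
        simp at h0
        rcases h0 with h0 | h0
        · exact h0
        · exact absurd h0 (Real.sqrt_pos.mpr hi).ne'
      refine ⟨?_, hb⟩
      rw [hb] at hab
      simp only [zero_smul, add_zero] at hab
      rcases smul_eq_zero.mp hab with h | h
      · exact h
      · exact absurd h hz.1
  · -- main case : the positive part of z is nonzero
    have hc : 0 < qv d zp := qv_pos_of_supp d hzp_supp hzp0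
    set c := qv d zp with hcdef
    have hqzn : qv d zn = -c := by
      have := hz.2
      rw [hsplit] at this
      linarith
    have hBzpzn : bv d zp zn = 0 := bv_zero_of_supp d hzp_supp hzn_pos_supp
    have hqsum : qv d (zp + zn) = 0 := by
      rw [qv_add, hqzn, hBzpzn]; ring
    obtain ⟨i₁, hi₁⟩ : ∃ i, zp i ≠ 0 := by
      by_contra h; push_neg at h; exact hzp0 (funext h)
    have hdi₁ : 0 < d i₁ := by by_contra h; exact hi₁ (hzp_supp i₁ h)
    have hstep1 : JoinedIn (Zs d) z (zp + zn) := by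
      apply joinedIn_of_fun (F := fun t => zp + zn + (1-t) • (z - zp - zn))
      · fun_prop
      · show zp + zn + ((1:ℝ)-0) • (z - zp - zn) = z
        rw [sub_zero, one_smul]; abel
      · show zp + zn + ((1:ℝ)-1) • (z - zp - zn) = zp + zn
        rw [sub_self, zero_smul, add_zero]
      · intro t ht
        have hdiff : ∀ i, d i ≠ 0 → (z - zp - zn) i = 0 := by
          intro i hdi
          rcases lt_or_gt_of_ne hdi with h | h
          · simp [hzp, hzn, h, not_lt.mpr h.le, lt_asymm h]
          · simp [hzp, hzn, h, not_lt.mpr h.le, lt_asymm h]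
        constructor
        · intro h0
          have := congrFun h0 i₁
          simp only [Pi.add_apply, Pi.smul_apply, Pi.zero_apply, smul_eq_mul] at this
          rw [hdiff i₁ hdi₁.ne', hzn_pos_supp i₁ hdi₁] at this
          simp at this
          exact hi₁ this
        · show qv d _ = 0
          rw [← hqsum]
          unfold qv
          apply Finset.sum_congr rfl
          intro i _
          by_cases h : d i = 0
          · rw [h]; ring
          · simp only [Pi.add_apply, Pi.smul_apply, smul_eq_mul, hdiff i h]
            ring
    -- move the negative part to ±√c • n
    have hnsupp' : ∀ i, ¬ 0 < (-d) i → (Real.sqrt c • n) i = 0 := by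
      intro i h
      simp only [Pi.neg_apply, neg_pos] at h
      rcases eq_or_ne i j₀ with rfl | hne
      · exact absurd hj h
      · simp [hn, nvec_ne_apply hne]
    have h2 := joined_move (d := -d) (u := zn) (u' := Real.sqrt c • n) (v := zp) hc
      hzn_supp' hnsupp' hzp_neg_supp
      (by rw [qv_negd, hqzn]; ring)
      (by rw [qv_negd, qv_smul, hn, qv_nvec hj, Real.sq_sqrt hc.le]; ring)
      (by rw [qv_negd]; rw [show zn + zp = zp + zn by abel, hqsum]; ring)
    rw [Zs_negd] at h2
    -- move the positive part to ±√c • p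
    have hpsupp' : ∀ i, ¬ 0 < d i → (Real.sqrt c • p) i = 0 := by
      intro i h
      rcases eq_or_ne i i₀ with rfl | hne
      · exact absurd hi h
      · simp [hp, pvec_ne_apply hi hne]
    have hqscp : qv d (Real.sqrt c • p) = c := by
      rw [qv_smul, hp, qv_pvec hi, Real.sq_sqrt hc.le]; ring
    have hcc : (Real.sqrt c)⁻¹ * Real.sqrt c = 1 :=
      inv_mul_cancel₀ (Real.sqrt_pos.mpr hc).ne'
    have hsqcpos : (0:ℝ) < (Real.sqrt c)⁻¹ := by
      have := Real.sqrt_pos.mpr hc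
      positivity
    -- helper to conclude from endpoints of the form σ √c p + τ √c n
    have main : ∀ w : Fin m → ℝ,
        JoinedIn (Zs d) (zp + zn) w → JoinedIn (Zs d) z w :=
      fun w h => hstep1.trans h
    rcases h2 with h2 | h2
    · -- zn moved to √c n
      have h2' : JoinedIn (Zs d) (zp + zn) (zp + Real.sqrt c • n) := by
        rw [show Real.sqrt c • n + zp = zp + Real.sqrt c • n by abel] at h2
        rw [show zn + zp = zp + zn by abel] at h2
        exact h2
      have hmem2 : qv d (zp + Real.sqrt c • n) = 0 := h2'.target_mem.2
      have h3 := joined_move (d := d) (u := zp) (u' := Real.sqrt c • p)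
        (v := Real.sqrt c • n) hc hzp_supp hpsupp'
        (fun i h => by
          rcases eq_or_ne i j₀ with rfl | hne
          · exact absurd h (by simp [not_lt.mpr hj.le])
          · simp [hn, nvec_ne_apply hne])
        rfl hqscp hmem2
      rcases h3 with h3 | h3
      · -- endpoint √c p + √c n : scale to p + n
        left
        apply main _ (h2'.trans (h3.trans ?_))
        have hscale := joined_smul h3.target_mem hsqcpos
        have hE : (Real.sqrt c)⁻¹ • (Real.sqrt c • p + Real.sqrt c • n) = p + n := by
          rw [smul_add, smul_smul, smul_smul, hcc, one_smul, one_smul]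
        rw [hE] at hscale
        exact hscale
      · -- endpoint -(√c p) + √c n : scale to -p + n, then use hub_signs
        have hscale := joined_smul h3.target_mem hsqcpos
        have hE : (Real.sqrt c)⁻¹ • (-(Real.sqrt c • p) + Real.sqrt c • n) = -p + n := by
          rw [smul_add, smul_neg, smul_smul, smul_smul, hcc, one_smul, one_smul]
        rw [hE] at hscale
        have hz_to : JoinedIn (Zs d) z (-p + n) := main _ (h2'.trans (h3.trans hscale))
        have hflip : -p + n = -(p - n) := by abel
        rcases hub_signs hm3 hi hj with hs | hs
        · right
          have := joined_neg hs
          rw [← hflip] at this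
          exact hz_to.trans this
        · left
          have := joined_neg hs
          rw [← hflip, neg_neg] at this
          exact hz_to.trans this
    · -- zn moved to -(√c n)
      have h2' : JoinedIn (Zs d) (zp + zn) (zp + -(Real.sqrt c • n)) := by
        rw [show -(Real.sqrt c • n) + zp = zp + -(Real.sqrt c • n) by abel] at h2
        rw [show zn + zp = zp + zn by abel] at h2
        exact h2
      have hmem2 : qv d (zp + -(Real.sqrt c • n)) = 0 := h2'.target_mem.2
      have h3 := joined_move (d := d) (u := zp) (u' := Real.sqrt c • p)
        (v := -(Real.sqrt c • n)) hc hzp_supp hpsupp'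
        (fun i h => by
          rcases eq_or_ne i j₀ with rfl | hne
          · exact absurd h (by simp [not_lt.mpr hj.le])
          · simp [hn, nvec_ne_apply hne])
        rfl hqscp hmem2
      rcases h3 with h3 | h3
      · -- endpoint √c p - √c n : scale to p - n, then hub_signs
        have hscale := joined_smul h3.target_mem hsqcpos
        have hE : (Real.sqrt c)⁻¹ • (Real.sqrt c • p + -(Real.sqrt c • n)) = p - n := by
          rw [smul_add, smul_neg, smul_smul, smul_smul, hcc, one_smul, one_smul,
            ← sub_eq_add_neg]
        rw [hE] at hscale
        have hz_to : JoinedIn (Zs d) z (p - n) := main _ (h2'.trans (h3.trans hscale))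
        rcases hub_signs hm3 hi hj with hs | hs
        · left; exact hz_to.trans hs
        · right; exact hz_to.trans hs
      · -- endpoint -(√c p) - √c n : scale to -(p+n)
        right
        apply main _ (h2'.trans (h3.trans ?_))
        have hscale := joined_smul h3.target_mem hsqcpos
        have hE : (Real.sqrt c)⁻¹ • (-(Real.sqrt c • p) + -(Real.sqrt c • n)) = -(p + n) := by
          rw [smul_add, smul_neg, smul_neg, smul_smul, smul_smul, hcc, one_smul, one_smul]
          abel
        rw [hE] at hscale
        exact hscale
lemma Ldiag (hm3 : 3 ≤ m) (d : Fin m → ℝ) {x y : Fin m → ℝ}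
    (hx : x ∈ Zs d) (hy : y ∈ Zs d) :
    JoinedIn (Zs d) x y ∨ JoinedIn (Zs d) x (-y) := by
  by_cases hneg : ∃ j, d j < 0
  · by_cases hpos : ∃ i, 0 < d i
    · obtain ⟨i₀, hi⟩ := hpos
      obtain ⟨j₀, hj⟩ := hneg
      rcases to_hub hm3 hi hj hx with h1 | h1 <;> rcases to_hub hm3 hi hj hy with h2 | h2
      · left; exact h1.trans h2.symm
      · right
        have h3 := joined_neg h2
        rw [neg_neg] at h3
        exact h1.trans h3.symm
      · right
        have h3 := joined_neg h2
        exact h1.trans h3.symm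
      · left; exact h1.trans h2.symm
    · push_neg at hpos
      have hd' : ∀ i, 0 ≤ (-d) i := by
        intro i; simp only [Pi.neg_apply]
        have := hpos i
        linarith
      have hx' : x ∈ Zs (-d) := by rw [Zs_negd]; exact hx
      have hy' : y ∈ Zs (-d) := by rw [Zs_negd]; exact hy
      have h := psd_case (-d) hd' hx' hy'
      rw [Zs_negd] at h
      exact h
  · push_neg at hneg
    exact psd_case d hneg hx hy

lemma joinedIn_map {X Y : Type*} [TopologicalSpace X] [TopologicalSpace Y]
    {S : Set X} {T : Set Y} {f : X → Y} (hf : Continuous f)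
    (hmap : ∀ z ∈ S, f z ∈ T) {x y : X} (h : JoinedIn S x y) : JoinedIn T (f x) (f y) := by
  obtain ⟨γ, hγ⟩ := h
  refine ⟨γ.map hf, fun t => ?_⟩
  rw [Path.map_coe, Function.comp_apply]
  exact hmap _ (hγ t)

lemma cont_mulVec (M : Matrix (Fin m) (Fin m) ℝ) :
    Continuous fun v : Fin m → ℝ => M *ᵥ v := by
  apply continuous_pi
  intro i
  show Continuous fun v : Fin m → ℝ => ∑ j, M i j * v j
  exact continuous_finset_sum _ fun j _ => continuous_const.mul (continuous_apply j)

lemma isHermitian_of_isSymm {M : Matrix (Fin m) (Fin m) ℝ} (h : M.IsSymm) :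
    M.IsHermitian := by
  ext i j
  rw [Matrix.conjTranspose_apply, star_trivial]
  exact h.apply i j

lemma Lmat (hm3 : 3 ≤ m) (M : Matrix (Fin m) (Fin m) ℝ) (hM : M.IsHermitian)
    {x y : Fin m → ℝ} (hx : x ≠ 0) (hy : y ≠ 0)
    (hqx : x ⬝ᵥ M *ᵥ x = 0) (hqy : y ⬝ᵥ M *ᵥ y = 0) :
    JoinedIn {z : Fin m → ℝ | z ≠ 0 ∧ z ⬝ᵥ M *ᵥ z = 0} x y ∨
    JoinedIn {z : Fin m → ℝ | z ≠ 0 ∧ z ⬝ᵥ M *ᵥ z = 0} x (-y) := by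
  classical
  set V : Matrix (Fin m) (Fin m) ℝ := (hM.eigenvectorUnitary : Matrix (Fin m) (Fin m) ℝ)
    with hVdef
  set d : Fin m → ℝ := hM.eigenvalues with hd
  have hspec : M = V * Matrix.diagonal d * star V := by
    have h0 : (RCLike.ofReal ∘ hM.eigenvalues : Fin m → ℝ) = d := by
      funext i
      simp [RCLike.ofReal_real_eq_id, hd]
    have := hM.spectral_theorem
    rw [h0] at this
    exact this
  have hVV : V * star V = 1 := Matrix.mem_unitaryGroup_iff.mp (hM.eigenvectorUnitary).2
  have hVV' : star V * V = 1 := Matrix.mem_unitaryGroup_iff'.mp (hM.eigenvectorUnitary).2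
  have hstar : star V = Vᵀ := by
    ext i j
    simp [Matrix.star_eq_conjTranspose, Matrix.conjTranspose_apply]
  have hretr : ∀ z : Fin m → ℝ, V *ᵥ (Vᵀ *ᵥ z) = z := by
    intro z
    rw [Matrix.mulVec_mulVec, ← hstar, hVV, Matrix.one_mulVec]
  have hretr' : ∀ z : Fin m → ℝ, Vᵀ *ᵥ (V *ᵥ z) = z := by
    intro z
    rw [Matrix.mulVec_mulVec, ← hstar, hVV', Matrix.one_mulVec]
  have hkey : ∀ z : Fin m → ℝ, z ⬝ᵥ M *ᵥ z = qv d (Vᵀ *ᵥ z) := by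
    intro z
    rw [hspec, hstar]
    rw [← Matrix.mulVec_mulVec, ← Matrix.mulVec_mulVec]
    rw [Matrix.dotProduct_mulVec]
    rw [show z ᵥ* V = Vᵀ *ᵥ z by rw [← Matrix.transpose_transpose V, Matrix.vecMul_transpose,
      Matrix.transpose_transpose]]
    unfold qv dotProduct
    apply Finset.sum_congr rfl
    intro i _
    rw [Matrix.mulVec_diagonal]
    ring
  have hmapsto : ∀ w ∈ Zs d, V *ᵥ w ∈ {z : Fin m → ℝ | z ≠ 0 ∧ z ⬝ᵥ M *ᵥ z = 0} := by
    intro w hw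
    constructor
    · intro h0
      apply hw.1
      rw [← hretr' w, h0, Matrix.mulVec_zero]
    · rw [hkey, hretr' w]
      exact hw.2
  have hx' : Vᵀ *ᵥ x ∈ Zs d := by
    constructor
    · intro h0
      apply hx
      rw [← hretr x, h0, Matrix.mulVec_zero]
    · rw [← hkey]; exact hqx
  have hy' : Vᵀ *ᵥ y ∈ Zs d := by
    constructor
    · intro h0
      apply hy
      rw [← hretr y, h0, Matrix.mulVec_zero]
    · rw [← hkey]; exact hqy
  rcases Ldiag hm3 d hx' hy' with h | h
  · left
    have h2 := joinedIn_map (cont_mulVec V) hmapsto h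
    rw [hretr, hretr] at h2
    exact h2
  · right
    have h2 := joinedIn_map (cont_mulVec V) hmapsto h
    rw [hretr, Matrix.mulVec_neg, hretr] at h2
    exact h2
lemma quad_comb (A B : Matrix (Fin m) (Fin m) ℝ) (a b : ℝ) (x : Fin m → ℝ) :
    x ⬝ᵥ (a • A + b • B) *ᵥ x = a * (x ⬝ᵥ A *ᵥ x) + b * (x ⬝ᵥ B *ᵥ x) := by
  rw [Matrix.add_mulVec, Matrix.smul_mulVec, Matrix.smul_mulVec,
    dotProduct_add, dotProduct_smul, dotProduct_smul, smul_eq_mul, smul_eq_mul]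

lemma quad_smul_vec (M : Matrix (Fin m) (Fin m) ℝ) (c : ℝ) (x : Fin m → ℝ) :
    (c • x) ⬝ᵥ M *ᵥ (c • x) = c^2 * (x ⬝ᵥ M *ᵥ x) := by
  rw [Matrix.mulVec_smul, dotProduct_smul, smul_dotProduct, smul_eq_mul, smul_eq_mul]
  ring

lemma quad_neg_vec (M : Matrix (Fin m) (Fin m) ℝ) (x : Fin m → ℝ) :
    (-x) ⬝ᵥ M *ᵥ (-x) = x ⬝ᵥ M *ᵥ x := by
  rw [Matrix.mulVec_neg, dotProduct_neg, neg_dotProduct, neg_neg]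

lemma cont_quad (M : Matrix (Fin m) (Fin m) ℝ) :
    Continuous fun x : Fin m → ℝ => x ⬝ᵥ M *ᵥ x := by
  show Continuous fun x : Fin m → ℝ => ∑ i, x i * ∑ j, M i j * x j
  exact continuous_finset_sum _ fun i _ => (continuous_apply i).mul
    (continuous_finset_sum _ fun j _ => continuous_const.mul (continuous_apply j))

lemma comb_symm {A B : Matrix (Fin m) (Fin m) ℝ} (hA : A.IsSymm) (hB : B.IsSymm) (a b : ℝ) :
    (a • A + b • B).IsHermitian := by
  apply isHermitian_of_isSymm
  unfold Matrix.IsSymm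
  rw [Matrix.transpose_add, Matrix.transpose_smul, Matrix.transpose_smul, hA, hB]

lemma posdef_of_pos (M : Matrix (Fin m) (Fin m) ℝ) (hsym : M.IsHermitian)
    (h : ∀ x : Fin m → ℝ, ‖x‖ = 1 → 0 < x ⬝ᵥ M *ᵥ x) : M.PosDef := by
  refine Matrix.PosDef.of_dotProduct_mulVec_pos hsym fun x hx => ?_
  have hsx : star x = x := funext fun i => by rw [Pi.star_apply, star_trivial]
  rw [hsx]
  have hc : 0 < ‖x‖ := norm_pos_iff.mpr hx
  have hu : ‖(‖x‖⁻¹ • x)‖ = 1 := by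
    rw [norm_smul, norm_inv, norm_norm, inv_mul_cancel₀ hc.ne']
  have h1 := h _ hu
  rw [quad_smul_vec] at h1
  nlinarith [sq_nonneg (‖x‖⁻¹)]

lemma exists_posdef_of_nonvanishing (hm3 : 3 ≤ m) {A B : Matrix (Fin m) (Fin m) ℝ}
    (hA : A.IsSymm) (hB : B.IsSymm) {t : ℝ}
    (hnv : ∀ x : Fin m → ℝ, ‖x‖ = 1 → x ⬝ᵥ (Real.cos t • A + Real.sin t • B) *ᵥ x ≠ 0) :
    ∃ μ σ : ℝ, (μ • A + σ • B).PosDef := by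
  set M := Real.cos t • A + Real.sin t • B with hM
  have hq := cont_quad M
  have hrank : 1 < Module.rank ℝ (Fin m → ℝ) := by
    rw [rank_fin_fun]
    exact_mod_cast (by omega : 1 < m)
  have hconn := (isConnected_sphere hrank (0 : Fin m → ℝ) zero_le_one).isPreconnected
  have hsub : Metric.sphere (0 : Fin m → ℝ) 1 ⊆
      ((fun x => x ⬝ᵥ M *ᵥ x) ⁻¹' Set.Ioi 0) ∪ ((fun x => x ⬝ᵥ M *ᵥ x) ⁻¹' Set.Iio 0) := by
    intro x hxS
    have hx1 : ‖x‖ = 1 := mem_sphere_zero_iff_norm.mp hxS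
    rcases lt_or_gt_of_ne (hnv x hx1) with h | h
    · exact Or.inr h
    · exact Or.inl h
  have hdisj : Disjoint ((fun x => x ⬝ᵥ M *ᵥ x) ⁻¹' Set.Ioi 0)
      ((fun x => x ⬝ᵥ M *ᵥ x) ⁻¹' Set.Iio 0) := by
    rw [Set.disjoint_iff]
    rintro x ⟨h1, h2⟩
    simp only [Set.mem_preimage, Set.mem_Ioi, Set.mem_Iio] at h1 h2
    linarith
  rcases hconn.subset_or_subset (hq.isOpen_preimage _ isOpen_Ioi)
      (hq.isOpen_preimage _ isOpen_Iio) hdisj hsub with hpos | hneg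
  · refine ⟨Real.cos t, Real.sin t, posdef_of_pos M (comb_symm hA hB _ _) ?_⟩
    intro x hx1
    exact hpos (mem_sphere_zero_iff_norm.mpr hx1)
  · refine ⟨Real.cos (t + Real.pi), Real.sin (t + Real.pi), ?_⟩
    have hMeq : Real.cos (t + Real.pi) • A + Real.sin (t + Real.pi) • B = -M := by
      rw [Real.cos_add_pi, Real.sin_add_pi, hM, neg_add, neg_smul, neg_smul]
    rw [hMeq]
    apply posdef_of_pos _ (by rw [← hMeq]; exact comb_symm hA hB _ _)
    intro x hx1
    have := hneg (mem_sphere_zero_iff_norm.mpr hx1)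
    have h2 : x ⬝ᵥ M *ᵥ x < 0 := this
    rw [Matrix.neg_mulVec, dotProduct_neg]
    linarith

lemma T_closed (A B : Matrix (Fin m) (Fin m) ℝ) (sgn : ℝ) :
    IsClosed {t : ℝ | ∃ x : Fin m → ℝ, ‖x‖ = 1 ∧
      Real.cos t * (x ⬝ᵥ A *ᵥ x) + Real.sin t * (x ⬝ᵥ B *ᵥ x) = 0 ∧
      0 ≤ sgn * (-(Real.sin t) * (x ⬝ᵥ A *ᵥ x) + Real.cos t * (x ⬝ᵥ B *ᵥ x))} := by
  set S := Metric.sphere (0 : Fin m → ℝ) 1 with hS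
  haveI : CompactSpace ↥S := isCompact_iff_compactSpace.mp (isCompact_sphere _ _)
  have hqA : Continuous fun p : ↥S × ℝ => ((p.1 : Fin m → ℝ) ⬝ᵥ A *ᵥ (p.1 : Fin m → ℝ)) :=
    (cont_quad A).comp (continuous_subtype_val.comp continuous_fst)
  have hqB : Continuous fun p : ↥S × ℝ => ((p.1 : Fin m → ℝ) ⬝ᵥ B *ᵥ (p.1 : Fin m → ℝ)) :=
    (cont_quad B).comp (continuous_subtype_val.comp continuous_fst)
  have hcos : Continuous fun p : ↥S × ℝ => Real.cos p.2 :=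
    Real.continuous_cos.comp continuous_snd
  have hsin : Continuous fun p : ↥S × ℝ => Real.sin p.2 :=
    Real.continuous_sin.comp continuous_snd
  set W : Set (↥S × ℝ) := {p | Real.cos p.2 * ((p.1 : Fin m → ℝ) ⬝ᵥ A *ᵥ (p.1 : Fin m → ℝ))
      + Real.sin p.2 * ((p.1 : Fin m → ℝ) ⬝ᵥ B *ᵥ (p.1 : Fin m → ℝ)) = 0 ∧
      0 ≤ sgn * (-(Real.sin p.2) * ((p.1 : Fin m → ℝ) ⬝ᵥ A *ᵥ (p.1 : Fin m → ℝ))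
      + Real.cos p.2 * ((p.1 : Fin m → ℝ) ⬝ᵥ B *ᵥ (p.1 : Fin m → ℝ)))} with hW
  have hWclosed : IsClosed W := by
    apply IsClosed.inter
    · exact isClosed_eq ((hcos.mul hqA).add (hsin.mul hqB)) continuous_const
    · exact isClosed_le continuous_const
        (continuous_const.mul ((hsin.neg.mul hqA).add (hcos.mul hqB)))
  have himg := isClosedMap_snd_of_compactSpace W hWclosed
  have heq : Prod.snd '' W = {t : ℝ | ∃ x : Fin m → ℝ, ‖x‖ = 1 ∧
      Real.cos t * (x ⬝ᵥ A *ᵥ x) + Real.sin t * (x ⬝ᵥ B *ᵥ x) = 0 ∧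
      0 ≤ sgn * (-(Real.sin t) * (x ⬝ᵥ A *ᵥ x) + Real.cos t * (x ⬝ᵥ B *ᵥ x))} := by
    ext t
    constructor
    · rintro ⟨⟨x, t'⟩, hpW, rfl⟩
      exact ⟨(x : Fin m → ℝ), mem_sphere_zero_iff_norm.mp x.2, hpW.1, hpW.2⟩
    · rintro ⟨x, hx1, h1, h2⟩
      exact ⟨(⟨x, mem_sphere_zero_iff_norm.mpr hx1⟩, t), ⟨h1, h2⟩, rfl⟩
  rw [← heq]
  exact himg
theorem core (hm3 : 3 ≤ m) (A B : Matrix (Fin m) (Fin m) ℝ) (hA : A.IsSymm) (hB : B.IsSymm)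
    (hP : ∀ x : Fin m → ℝ, x ⬝ᵥ A *ᵥ x = 0 → x ⬝ᵥ B *ᵥ x = 0 → x = 0) :
    ∃ μ σ : ℝ, (μ • A + σ • B).PosDef := by
  by_cases hcase : ∃ t : ℝ, ∀ x : Fin m → ℝ, ‖x‖ = 1 →
      x ⬝ᵥ (Real.cos t • A + Real.sin t • B) *ᵥ x ≠ 0
  · obtain ⟨t, ht⟩ := hcase
    exact exists_posdef_of_nonvanishing hm3 hA hB ht
  · exfalso
    push_neg at hcase
    set Tp := {t : ℝ | ∃ x : Fin m → ℝ, ‖x‖ = 1 ∧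
      Real.cos t * (x ⬝ᵥ A *ᵥ x) + Real.sin t * (x ⬝ᵥ B *ᵥ x) = 0 ∧
      0 ≤ (1:ℝ) * (-(Real.sin t) * (x ⬝ᵥ A *ᵥ x) + Real.cos t * (x ⬝ᵥ B *ᵥ x))} with hTp
    set Tm := {t : ℝ | ∃ x : Fin m → ℝ, ‖x‖ = 1 ∧
      Real.cos t * (x ⬝ᵥ A *ᵥ x) + Real.sin t * (x ⬝ᵥ B *ᵥ x) = 0 ∧
      0 ≤ (-1:ℝ) * (-(Real.sin t) * (x ⬝ᵥ A *ᵥ x) + Real.cos t * (x ⬝ᵥ B *ᵥ x))} with hTm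
    have hTpc : IsClosed Tp := by rw [hTp]; exact T_closed A B 1
    have hTmc : IsClosed Tm := by rw [hTm]; exact T_closed A B (-1)
    have hcover : ∀ t : ℝ, t ∈ Tp ∪ Tm := by
      intro t
      obtain ⟨x, hx1, hx0⟩ := hcase t
      rw [quad_comb] at hx0
      rcases le_total 0 (-(Real.sin t) * (x ⬝ᵥ A *ᵥ x) + Real.cos t * (x ⬝ᵥ B *ᵥ x)) with h | h
      · exact Or.inl ⟨x, hx1, hx0, by linarith⟩
      · exact Or.inr ⟨x, hx1, hx0, by linarith⟩
    have hdisj : ∀ t : ℝ, t ∈ Tp → t ∈ Tm → False := by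
      rintro t ⟨x, hx1, hqx, hpx⟩ ⟨y, hy1, hqy, hpy⟩
      rw [one_mul] at hpx
      have hpy' : -(Real.sin t) * (y ⬝ᵥ A *ᵥ y) + Real.cos t * (y ⬝ᵥ B *ᵥ y) ≤ 0 := by
        linarith
      set M := Real.cos t • A + Real.sin t • B with hM
      have hMsym := comb_symm hA hB (Real.cos t) (Real.sin t)
      have hx0 : x ≠ 0 := fun h => by rw [h, norm_zero] at hx1; norm_num at hx1
      have hy0 : y ≠ 0 := fun h => by rw [h, norm_zero] at hy1; norm_num at hy1
      have hqx' : x ⬝ᵥ M *ᵥ x = 0 := by rw [hM, quad_comb]; exact hqx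
      have hqy' : y ⬝ᵥ M *ᵥ y = 0 := by rw [hM, quad_comb]; exact hqy
      have hLM := Lmat hm3 M hMsym hx0 hy0 hqx' hqy'
      obtain ⟨y', hy'q, hpath⟩ : ∃ y' : Fin m → ℝ,
          (-(Real.sin t) * (y' ⬝ᵥ A *ᵥ y') + Real.cos t * (y' ⬝ᵥ B *ᵥ y')) ≤ 0 ∧
          JoinedIn {z : Fin m → ℝ | z ≠ 0 ∧ z ⬝ᵥ M *ᵥ z = 0} x y' := by
        rcases hLM with h | h
        · exact ⟨y, hpy', h⟩
        · refine ⟨-y, ?_, h⟩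
          rw [quad_neg_vec, quad_neg_vec]
          exact hpy'
      obtain ⟨γ, hγ⟩ := hpath
      set g : ℝ → ℝ := fun s => -(Real.sin t) * ((γ.extend s) ⬝ᵥ A *ᵥ (γ.extend s))
        + Real.cos t * ((γ.extend s) ⬝ᵥ B *ᵥ (γ.extend s)) with hg
      have hgc : Continuous g := by
        apply Continuous.add
        · exact continuous_const.mul ((cont_quad A).comp γ.continuous_extend)
        · exact continuous_const.mul ((cont_quad B).comp γ.continuous_extend)
      have hg0 : 0 ≤ g 0 := by rw [hg]; simp only [Path.extend_zero]; exact hpx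
      have hg1 : g 1 ≤ 0 := by rw [hg]; simp only [Path.extend_one]; exact hy'q
      have hIVT := intermediate_value_Icc' (by norm_num : (0:ℝ) ≤ 1) hgc.continuousOn
      obtain ⟨s, hs, hgs⟩ := hIVT ⟨hg1, hg0⟩
      set z := γ.extend s with hz
      have hzmem : z ∈ {z : Fin m → ℝ | z ≠ 0 ∧ z ⬝ᵥ M *ᵥ z = 0} := by
        rw [hz, Path.extend_apply γ hs]
        exact hγ _
      have hqz : Real.cos t * (z ⬝ᵥ A *ᵥ z) + Real.sin t * (z ⬝ᵥ B *ᵥ z) = 0 := by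
        have h5 := hzmem.2
        rw [hM, quad_comb] at h5
        exact h5
      have hpz : -(Real.sin t) * (z ⬝ᵥ A *ᵥ z) + Real.cos t * (z ⬝ᵥ B *ᵥ z) = 0 := hgs
      have h1 := Real.sin_sq_add_cos_sq t
      have hAz : z ⬝ᵥ A *ᵥ z = 0 := by
        linear_combination Real.cos t * hqz - Real.sin t * hpz - (z ⬝ᵥ A *ᵥ z) * h1
      have hBz : z ⬝ᵥ B *ᵥ z = 0 := by
        linear_combination Real.sin t * hqz + Real.cos t * hpz - (z ⬝ᵥ B *ᵥ z) * h1
      exact hzmem.1 (hP z hAz hBz)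
    have hshift : ∀ t : ℝ, t ∈ Tm → t + Real.pi ∈ Tp := by
      rintro t ⟨x, hx1, hq, hp⟩
      refine ⟨x, hx1, ?_, ?_⟩
      · rw [Real.cos_add_pi, Real.sin_add_pi]
        linear_combination -hq
      · rw [Real.cos_add_pi, Real.sin_add_pi]
        linarith
    have hshift' : ∀ t : ℝ, t ∈ Tp → t + Real.pi ∈ Tm := by
      rintro t ⟨x, hx1, hq, hp⟩
      refine ⟨x, hx1, ?_, ?_⟩
      · rw [Real.cos_add_pi, Real.sin_add_pi]
        linear_combination -hq
      · rw [Real.cos_add_pi, Real.sin_add_pi]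
        linarith
    have hTpcompl : Tp = Tmᶜ := by
      ext t
      constructor
      · intro h hm'
        exact hdisj t h hm'
      · intro h
        rcases hcover t with h' | h'
        · exact h'
        · exact absurd h' h
    have hTpopen : IsOpen Tp := by rw [hTpcompl]; exact hTmc.isOpen_compl
    obtain ⟨t₀, ht₀⟩ : ∃ t, t ∈ Tp := by
      rcases hcover 0 with h | h
      · exact ⟨0, h⟩
      · exact ⟨0 + Real.pi, hshift 0 h⟩
    have ht₁ : t₀ + Real.pi ∈ Tm := hshift' t₀ ht₀
    have ht₁' : t₀ + Real.pi ∉ Tp := fun h => hdisj _ h ht₁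
    rcases isClopen_iff.mp ⟨hTpc, hTpopen⟩ with h | h
    · rw [h] at ht₀; exact ht₀
    · rw [h] at ht₁'; exact ht₁' (Set.mem_univ _)
end Cal
/-- if `Q(A) ∩ Q(B) = N(A) ∩ N(B)` and `dim(N(A) ∩ N(B)) ≤ n − 3`, and the
columns of `U` form a basis of the orthogonal complement of `N(A) ∩ N(B)`, then there
exist `μ, σ` with `μ·UᵀAU + σ·UᵀBU ≻ 0`. -/
theorem stmt_8 {n : ℕ} (A B : Matrix (Fin n) (Fin n) ℝ)
    (hA : A.IsSymm) (hB : B.IsSymm)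
    (hQN : ∀ v : Fin n → ℝ,
      (v ⬝ᵥ A *ᵥ v = 0 ∧ v ⬝ᵥ B *ᵥ v = 0) ↔ (A *ᵥ v = 0 ∧ B *ᵥ v = 0))
    (r : ℕ)
    (hr : r = Module.finrank ℝ
      ↥(LinearMap.ker A.mulVecLin ⊓ LinearMap.ker B.mulVecLin))
    (hdim : r + 3 ≤ n)
    (U : Matrix (Fin n) (Fin (n - r)) ℝ)
    (hUindep : LinearIndependent ℝ (fun j : Fin (n - r) => Uᵀ j))
    (hUspan : (Submodule.span ℝ (Set.range Uᵀ) : Set (Fin n → ℝ)) =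
      {v : Fin n → ℝ | ∀ w : Fin n → ℝ, A *ᵥ w = 0 → B *ᵥ w = 0 → w ⬝ᵥ v = 0}) :
    ∃ μ σ : ℝ, (μ • (Uᵀ * A * U) + σ • (Uᵀ * B * U)).PosDef := by
  have hm3 : 3 ≤ n - r := by omega
  have hsymm : ∀ M : Matrix (Fin n) (Fin n) ℝ, M.IsSymm → (Uᵀ * M * U).IsSymm := by
    intro M hM
    unfold Matrix.IsSymm
    rw [Matrix.transpose_mul, Matrix.transpose_mul, Matrix.transpose_transpose, hM,
      Matrix.mul_assoc]
  apply Cal.core hm3 (Uᵀ * A * U) (Uᵀ * B * U) (hsymm A hA) (hsymm B hB)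
  intro x hxA hxB
  have key : ∀ M : Matrix (Fin n) (Fin n) ℝ,
      x ⬝ᵥ (Uᵀ * M * U) *ᵥ x = (U *ᵥ x) ⬝ᵥ M *ᵥ (U *ᵥ x) := by
    intro M
    rw [← Matrix.mulVec_mulVec, ← Matrix.mulVec_mulVec, Matrix.dotProduct_mulVec x Uᵀ,
      Matrix.vecMul_transpose]
  rw [key A] at hxA
  rw [key B] at hxB
  have h2 := (hQN (U *ᵥ x)).mp ⟨hxA, hxB⟩
  have hrepr : U *ᵥ x = ∑ j, x j • Uᵀ j := by
    funext i
    rw [Finset.sum_apply]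
    unfold Matrix.mulVec dotProduct
    apply Finset.sum_congr rfl
    intro j _
    rw [Pi.smul_apply, Matrix.transpose_apply, smul_eq_mul]
    ring
  have hmem : U *ᵥ x ∈ (Submodule.span ℝ (Set.range Uᵀ) : Set (Fin n → ℝ)) := by
    rw [hrepr]
    exact Submodule.sum_mem _ fun j _ =>
      Submodule.smul_mem _ _ (Submodule.subset_span ⟨j, rfl⟩)
  have h3 : U *ᵥ x ∈ {v : Fin n → ℝ | ∀ w : Fin n → ℝ,
      A *ᵥ w = 0 → B *ᵥ w = 0 → w ⬝ᵥ v = 0} := by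
    rw [← hUspan]; exact hmem
  have hself : (U *ᵥ x) ⬝ᵥ (U *ᵥ x) = 0 := h3 (U *ᵥ x) h2.1 h2.2
  have hU0 : U *ᵥ x = 0 := dotProduct_self_eq_zero.mp hself
  have hall := Fintype.linearIndependent_iff.mp hUindep x (by rw [← hrepr]; exact hU0)
  funext i
  exact hall i
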